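/- With Φ : [0,1]^ℕ → [0,1]^ℕ defined by Φ(x)_0 = x_0 and Φ(x)_{n+1} = x_{n+1} + sign(Φ(x)_n - x_{n+1}) · max(|Φ(x)_n - x_{n+1}| - 2^{-n}, 0), the function φ(x) = lim_n Φ(x)_n is well defined and continuous on [0,1]^ℕ with the product topology. -/

import Mathlib

open Set Filter

/-- The correction map `Φ`. -/
noncomputable def Phi (x : ℕ → ℝ) : ℕ → ℝ
  | 0 => x 0
  | n + 1 => x (n + 1) +
      Real.sign (Phi x n - x (n + 1)) * max (|Phi x n - x (n + 1)| - (1/2 : ℝ)^n) 0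

/-- `φ(x) = lim_n Φ(x)_n`, defined on the cube `[0,1]^ℕ` with the product topology. -/
noncomputable def phiLim (x : ℕ → Set.Icc (0:ℝ) 1) : ℝ :=
  limUnder atTop (Phi (fun n => (x n : ℝ)))

lemma sign_max_eq (d c : ℝ) (hc : 0 ≤ c) :
    Real.sign d * max (|d| - c) 0 = d - max (min d c) (-c) := by
  rcases lt_trichotomy d 0 with h | h | h
  · rw [Real.sign_of_neg h, abs_of_neg h, min_eq_left (h.le.trans hc)]
    rcases le_total (-d - c) 0 with h2 | h2
    · rw [max_eq_right h2, max_eq_left (by linarith)]; ring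
    · rw [max_eq_left h2, max_eq_right (by linarith)]; ring
  · subst h
    simp [Real.sign_zero, min_eq_left hc, max_eq_left (neg_nonpos.mpr hc)]
  · rw [Real.sign_of_pos h, abs_of_pos h,
      max_eq_left ((neg_nonpos.mpr hc).trans (le_min h.le hc))]
    rcases le_total d c with h2 | h2
    · rw [max_eq_right (by linarith), min_eq_left h2]; ring
    · rw [max_eq_left (by linarith), min_eq_right h2]; ring

lemma phi_succ (x : ℕ → ℝ) (n : ℕ) :
    Phi x (n + 1) = x (n + 1) + (Phi x n - x (n + 1)
      - max (min (Phi x n - x (n + 1)) ((1/2 : ℝ)^n)) (-(1/2 : ℝ)^n)) := by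
  rw [Phi, sign_max_eq _ _ (by positivity)]

lemma phi_step (x : ℕ → ℝ) (n : ℕ) :
    dist (Phi x n) (Phi x (n + 1)) ≤ (1/2 : ℝ)^n := by
  rw [phi_succ, Real.dist_eq]
  set d := Phi x n - x (n + 1)
  have : Phi x n - (x (n + 1) + (d - max (min d ((1/2:ℝ)^n)) (-(1/2:ℝ)^n)))
      = max (min d ((1/2:ℝ)^n)) (-(1/2:ℝ)^n) := by ring
  rw [this, abs_le]
  constructor
  · exact le_max_right _ _
  · exact max_le (min_le_right _ _) (neg_le_self (by positivity))

lemma phi_cauchy (x : ℕ → ℝ) : CauchySeq (Phi x) :=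
  cauchySeq_of_le_geometric (1/2) 1 (by norm_num)
    (fun n => by simpa using phi_step x n)

lemma phi_cont (n : ℕ) :
    Continuous (fun x : ℕ → Set.Icc (0:ℝ) 1 => Phi (fun k => (x k : ℝ)) n) := by
  induction n with
  | zero =>
    simp only [Phi]
    exact continuous_subtype_val.comp (continuous_apply 0)
  | succ n ih =>
    simp only [phi_succ]
    have hx : Continuous (fun x : ℕ → Set.Icc (0:ℝ) 1 => ((x (n+1) : ℝ))) :=
      continuous_subtype_val.comp (continuous_apply (n+1))
    fun_prop

theorem stmt9 :
    (∀ x : ℕ → Set.Icc (0:ℝ) 1,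
      Tendsto (Phi (fun n => (x n : ℝ))) atTop (nhds (phiLim x))) ∧
    Continuous phiLim := by
  have htend : ∀ x : ℕ → Set.Icc (0:ℝ) 1,
      Tendsto (Phi (fun n => (x n : ℝ))) atTop (nhds (phiLim x)) :=
    fun x => (phi_cauchy _).tendsto_limUnder
  refine ⟨htend, ?_⟩
  have hbound : ∀ (x : ℕ → Set.Icc (0:ℝ) 1) (n : ℕ),
      dist (Phi (fun k => (x k : ℝ)) n) (phiLim x) ≤ 1 * (1/2:ℝ)^n / (1 - 1/2) := by
    intro x n
    exact dist_le_of_le_geometric_of_tendsto (1/2) 1 (by norm_num)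
      (fun m => by simpa using phi_step (fun k => (x k : ℝ)) m) (htend x) n
  have hunif : TendstoUniformly
      (fun n (x : ℕ → Set.Icc (0:ℝ) 1) => Phi (fun k => (x k : ℝ)) n)
      phiLim atTop := by
    rw [Metric.tendstoUniformly_iff]
    intro ε hε
    have h0 : Tendsto (fun n : ℕ => 1 * (1/2:ℝ)^n / (1 - 1/2)) atTop (nhds 0) := by
      have h1 : ∀ n : ℕ, 1 * (1/2:ℝ)^n / (1 - 1/2) = 2 * (1/2)^n := fun n => by ring
      simp only [h1]
      simpa using (tendsto_pow_atTop_nhds_zero_of_lt_one (by norm_num : (0:ℝ) ≤ 1/2)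
        (by norm_num : (1/2:ℝ) < 1)).const_mul (2 : ℝ)
    filter_upwards [(h0.eventually_lt_const hε : ∀ᶠ n in atTop, _)] with n hn x
    rw [dist_comm]
    exact lt_of_le_of_lt (hbound x n) hn
  exact hunif.continuous (Filter.Eventually.of_forall phi_cont).frequently
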